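/- arXiv:2506.07755 — 2 statements merged into one kernel-verified Lean document; each statement's English description precedes it below -/
import Mathlib

section
/- Let E be a real normed vector space and U a set of control inputs. Suppose h : E → ℝ is differentiable, φ : E → E is differentiable with h ∘ φ = h, ψ : U → U is a map, f : E × U → E is a dynamics map satisfying the equivariance condition f(φ(x), ψ(u)) = Dφ(x)[f(x, u)] for all x ∈ E, u ∈ U, and α : ℝ → ℝ is any function. If the control barrier function constraint Dh(x)[f(x, u)] ≥ -α(h(x)) holds at (x, u), then the transformed constraint Dh(φ(x))[f(φ(x), ψ(u))] ≥ -α(h(φ(x))) also holds. -/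
/-- Preservation of the control barrier function constraint under symmetry: if `h` is
invariant under `φ` (`h ∘ φ = h`), the dynamics `f` are equivariant
(`f (φ x, ψ u) = Dφ x [f (x, u)]`), and the CBF constraint
`Dh x [f (x, u)] ≥ -α (h x)` holds at `(x, u)`, then the transformed constraint
`Dh (φ x) [f (φ x, ψ u)] ≥ -α (h (φ x))` also holds. -/
theorem cbf_constraint_preserved {E U : Type*} [NormedAddCommGroup E]
    [NormedSpace ℝ E] (h : E → ℝ) (φ : E → E) (ψ : U → U) (f : E × U → E)
    (α : ℝ → ℝ)
    (hh : Differentiable ℝ h) (hφ : Differentiable ℝ φ)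
    (hinv : h ∘ φ = h)
    (hequiv : ∀ (x : E) (u : U), f (φ x, ψ u) = fderiv ℝ φ x (f (x, u)))
    (x : E) (u : U)
    (hcbf : fderiv ℝ h x (f (x, u)) ≥ -α (h x)) :
    fderiv ℝ h (φ x) (f (φ x, ψ u)) ≥ -α (h (φ x)) := by
  have hval : h (φ x) = h x := congrFun hinv x
  have hchain : fderiv ℝ (h ∘ φ) x = (fderiv ℝ h (φ x)).comp (fderiv ℝ φ x) :=
    fderiv_comp x (hh (φ x)) (hφ x)
  rw [hinv] at hchain
  rw [hequiv, hval]
  have := congrArg (fun L : E →L[ℝ] ℝ => L (f (x, u))) hchain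
  simp only [ContinuousLinearMap.comp_apply] at this
  rw [← this]
  exact hcbf
end

section
/- Let X be a set of states, E a real normed vector space, ψ : E → E a norm-preserving linear bijection, φ : X → X, π_nom : X → E equivariant (π_nom(φ(x)) = ψ(π_nom(x))), and K : X → Set E with K(φ(x)) = ψ '' K(x). Suppose π* : X → E is a selection such that for every x ∈ X, π*(x) ∈ K(x), π*(x) minimizes u ↦ ‖u − π_nom(x)‖ over K(x), and this minimizer is unique (any v ∈ K(x) with ‖v − π_nom(x)‖ = ‖π*(x) − π_nom(x)‖ equals π*(x)). Then π* is equivariant: π*(φ(x)) = ψ(π*(x)) for all x ∈ X. -/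
/-- Equivariance of the safety-filtered policy: if `π*` selects, at each state, the
unique minimizer of `‖u − π_nom x‖` over the feasible set `K x`, with `π_nom`
equivariant and `K (φ x) = ψ '' K x` for a linear isometric equivalence `ψ`, then
`π*` is equivariant: `π* (φ x) = ψ (π* x)`. -/
theorem qp_policy_equivariant {X E : Type*} [NormedAddCommGroup E]
    [NormedSpace ℝ E] (φ : X → X) (ψ : E ≃ₗᵢ[ℝ] E) (πnom : X → E)
    (hπ : ∀ x : X, πnom (φ x) = ψ (πnom x))
    (K : X → Set E) (hK : ∀ x : X, K (φ x) = ψ '' K x)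
    (πstar : X → E)
    (hmem : ∀ x : X, πstar x ∈ K x)
    (hmin : ∀ x : X, ∀ v ∈ K x, ‖πstar x - πnom x‖ ≤ ‖v - πnom x‖)
    (huniq : ∀ x : X, ∀ v ∈ K x,
      ‖v - πnom x‖ = ‖πstar x - πnom x‖ → v = πstar x) :
    ∀ x : X, πstar (φ x) = ψ (πstar x) := by
  intro x
  have hmemψ : ψ (πstar x) ∈ K (φ x) := by
    rw [hK x]; exact ⟨πstar x, hmem x, rfl⟩
  have hnorm : ∀ u : E, ‖ψ u - πnom (φ x)‖ = ‖u - πnom x‖ := by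
    intro u
    rw [hπ x, ← ψ.map_sub, ψ.norm_map]
  -- πstar (φ x) = ψ v for some v ∈ K x
  obtain ⟨v, hv, hveq⟩ := (hK x) ▸ hmem (φ x)
  have h1 : ‖πstar (φ x) - πnom (φ x)‖ ≤ ‖ψ (πstar x) - πnom (φ x)‖ :=
    hmin (φ x) _ hmemψ
  have h2 : ‖ψ (πstar x) - πnom (φ x)‖ ≤ ‖πstar (φ x) - πnom (φ x)‖ := by
    rw [hnorm, ← hveq, hnorm]
    exact hmin x v hv
  exact (huniq (φ x) _ hmemψ (le_antisymm h2 h1)).symm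
end
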